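/- Every 2×2-polyomino has an odd number of interior vertices. -/

import Mathlib

/-- Two unit cells (or two lattice points) of the plane square grid are adjacent if they
differ by one in exactly one coordinate. -/
def CellAdj (p q : ℤ × ℤ) : Prop :=
  (p.1 = q.1 ∧ (p.2 = q.2 + 1 ∨ q.2 = p.2 + 1)) ∨
  (p.2 = q.2 ∧ (p.1 = q.1 + 1 ∨ q.1 = p.1 + 1))

/-- A set of cells is connected (via edge-adjacency, staying inside the set). -/
def ConnectedCells (S : Set (ℤ × ℤ)) : Prop :=
  ∀ p ∈ S, ∀ q ∈ S, Relation.ReflTransGen (fun a b => CellAdj a b ∧ a ∈ S ∧ b ∈ S) p q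

/-- A polyomino, given by its finite nonempty set of unit cells: it is cell-connected and
has no holes (every interior face is a unit square, i.e. the complement is connected). -/
def IsPolyomino (P : Finset (ℤ × ℤ)) : Prop :=
  P.Nonempty ∧ ConnectedCells ↑P ∧ ConnectedCells ((↑P : Set (ℤ × ℤ))ᶜ)

/-- The `2×2`-polyomino obtained from `Q` by replacing each unit cell by a `2×2` chessboard. -/
def scale2 (Q : Finset (ℤ × ℤ)) : Finset (ℤ × ℤ) :=
  Q.biUnion fun c =>
    {(2 * c.1, 2 * c.2), (2 * c.1 + 1, 2 * c.2), (2 * c.1, 2 * c.2 + 1),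
      (2 * c.1 + 1, 2 * c.2 + 1)}

/-- The interior vertices (vertices of degree 4) of the polyomino with cell set `P`:
lattice points all four of whose surrounding cells belong to `P`. -/
def interiorVertices (P : Finset (ℤ × ℤ)) : Finset (ℤ × ℤ) :=
  P.filter fun p => (p.1 - 1, p.2) ∈ P ∧ (p.1, p.2 - 1) ∈ P ∧ (p.1 - 1, p.2 - 1) ∈ P

namespace PolyAux

abbrev Cell := ℤ × ℤ

def Rel (S : Set Cell) (a b : Cell) : Prop := CellAdj a b ∧ a ∈ S ∧ b ∈ S

def Reach (S : Set Cell) : Cell → Cell → Prop := Relation.ReflTransGen (Rel S)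

lemma cellAdj_symm {a b : Cell} (h : CellAdj a b) : CellAdj b a := by
  unfold CellAdj at *; omega

lemma cellAdj_ne {a b : Cell} (h : CellAdj a b) : a ≠ b := by
  rintro rfl; unfold CellAdj at h; omega

lemma cellAdj_cases {a b : Cell} (h : CellAdj a b) :
    b = (a.1 + 1, a.2) ∨ b = (a.1 - 1, a.2) ∨ b = (a.1, a.2 + 1) ∨ b = (a.1, a.2 - 1) := by
  obtain ⟨x, y⟩ := a; obtain ⟨u, v⟩ := b
  unfold CellAdj at h; simp only [Prod.mk.injEq]; omega

lemma cellAdj_horiz {x y : ℤ} : CellAdj (x, y) (x - 1, y) := by unfold CellAdj; omega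
lemma cellAdj_horiz' {x y : ℤ} : CellAdj (x, y) (x + 1, y) := by unfold CellAdj; omega
lemma cellAdj_vert {x y : ℤ} : CellAdj (x, y) (x, y - 1) := by unfold CellAdj; omega
lemma cellAdj_vert' {x y : ℤ} : CellAdj (x, y) (x, y + 1) := by unfold CellAdj; omega

lemma rel_symm {S : Set Cell} : Symmetric (Rel S) := by
  rintro a b ⟨h1, h2, h3⟩; exact ⟨cellAdj_symm h1, h3, h2⟩

lemma reach_symm {S : Set Cell} {a b : Cell} (h : Reach S a b) : Reach S b a :=
  (@Relation.ReflTransGen.stdSymm _ _ ⟨fun _ _ h' => rel_symm h'⟩).symm _ _ h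

lemma reach_mono {S T : Set Cell} (hST : S ⊆ T) {a b : Cell} (h : Reach S a b) :
    Reach T a b := by
  refine Relation.ReflTransGen.mono ?_ _ _ h
  rintro x y ⟨h1, h2, h3⟩; exact ⟨h1, hST h2, hST h3⟩

lemma mem_of_reach {S : Set Cell} {a b : Cell} (h : Reach S a b) : a = b ∨ b ∈ S := by
  induction h with
  | refl => exact Or.inl rfl
  | tail _ h2 _ => exact Or.inr h2.2.2

lemma reach_restrict {S : Set Cell} {x y : Cell} (h : Reach S x y) :
    Reach {z | z ∈ S ∧ Reach S x z} x y := by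
  induction h with
  | refl => exact Relation.ReflTransGen.refl
  | tail hxy hrel ih =>
    exact ih.tail ⟨hrel.1, ⟨hrel.2.1, reach_mono (fun z hz => hz.1) ih⟩,
      ⟨hrel.2.2, (reach_mono (fun z hz => hz.1) ih).tail hrel⟩⟩

inductive Walk (S : Set Cell) : Cell → Cell → List Cell → Prop
  | single (a : Cell) (h : a ∈ S) : Walk S a a [a]
  | cons {a b q : Cell} {l : List Cell} (ha : a ∈ S) (hadj : CellAdj a b)
      (hw : Walk S b q l) : Walk S a q (a :: l)

lemma walk_start_mem {S : Set Cell} {p q : Cell} {l : List Cell} (h : Walk S p q l) :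
    p ∈ S := by cases h with
  | single _ h => exact h
  | cons ha _ _ => exact ha

lemma walk_end_mem {S : Set Cell} {p q : Cell} {l : List Cell} (h : Walk S p q l) :
    q ∈ S := by induction h with
  | single _ h => exact h
  | cons _ _ _ ih => exact ih

lemma walk_mem {S : Set Cell} {p q : Cell} {l : List Cell} (h : Walk S p q l) :
    ∀ z ∈ l, z ∈ S := by
  induction h with
  | single a h =>
    intro z hz; simp at hz; subst hz; exact h
  | cons ha _ _ ih =>
    intro z hz
    rcases List.mem_cons.1 hz with rfl | hz
    · exact ha
    · exact ih z hz

lemma walk_mono {S T : Set Cell} (hST : S ⊆ T) {p q : Cell} {l : List Cell}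
    (h : Walk S p q l) : Walk T p q l := by
  induction h with
  | single a h => exact Walk.single a (hST h)
  | cons ha hadj _ ih => exact Walk.cons (hST ha) hadj ih

lemma walk_cons_form {S : Set Cell} {p q : Cell} {l : List Cell} (h : Walk S p q l) :
    ∃ l', l = p :: l' := by cases h with
  | single => exact ⟨[], rfl⟩
  | cons => exact ⟨_, rfl⟩

lemma walk_snoc {S : Set Cell} {x : Cell} (hx : x ∈ S) :
    ∀ {p q : Cell} {l : List Cell}, Walk S p q l → CellAdj q x → Walk S p x (l ++ [x]) := by
  intro p q l h
  induction h with
  | single a h => exact fun hadj => Walk.cons h hadj (Walk.single x hx)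
  | cons ha hadj' _ ih => exact fun hadj => Walk.cons ha hadj' (ih hadj)

lemma reach_to_walk {S : Set Cell} {p q : Cell} (h : Reach S p q) (hp : p ∈ S) :
    ∃ l, Walk S p q l := by
  induction h with
  | refl => exact ⟨[p], Walk.single p hp⟩
  | tail _ hrel ih =>
    obtain ⟨l, hl⟩ := ih
    exact ⟨l ++ [_], walk_snoc hrel.2.2 hl hrel.1⟩

lemma walk_to_reach {S : Set Cell} {p q : Cell} {l : List Cell} (h : Walk S p q l) :
    Reach S p q := by
  induction h with
  | single => exact Relation.ReflTransGen.refl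
  | cons ha hadj hw ih =>
    exact Relation.ReflTransGen.head ⟨hadj, ha, walk_start_mem hw⟩ ih

lemma surgery {S : Set Cell} {c : Cell}
    (H : ∀ u v : Cell, u ∈ S \ {c} → v ∈ S \ {c} → CellAdj u c → CellAdj c v →
      Reach (S \ {c}) u v) :
    ∀ n (l : List Cell) (p q : Cell), l.length = n → Walk S p q l → p ≠ c → q ≠ c →
      Reach (S \ {c}) p q := by
  intro n
  induction n using Nat.strong_induction_on with
  | _ n IH =>
    intro l p q hlen hw hp hq
    cases hw with
    | single => exact Relation.ReflTransGen.refl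
    | cons ha hadj hw' =>
      rename_i b l'
      by_cases hb : b = c
      · subst hb
        cases hw' with
        | single => exact absurd rfl hq
        | cons hb' hadj' hw'' =>
          rename_i z l''
          have hz : z ≠ b := fun h => cellAdj_ne hadj' h.symm
          have h1 : Reach (S \ {b}) p z :=
            H p z ⟨ha, hp⟩ ⟨walk_start_mem hw'', hz⟩ hadj hadj'
          obtain ⟨l2, rfl⟩ := walk_cons_form hw''
          have h2 : Reach (S \ {b}) z q := by
            refine IH (z :: l2).length ?_ _ z q rfl hw'' hz hq
            subst hlen; simp
          exact h1.trans h2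
      · have h2 : Reach (S \ {c}) b q := by
          refine IH l'.length ?_ _ b q rfl hw' hb hq
          subst hlen; simp
        exact Relation.ReflTransGen.head
          ⟨hadj, ⟨ha, hp⟩, ⟨walk_start_mem hw', hb⟩⟩ h2

lemma truncate {S : Set Cell} {c : Cell} :
    ∀ n (l : List Cell) (p : Cell), l.length = n → Walk S p c l → p ≠ c →
    ∃ m, m ∈ S ∧ m ≠ c ∧ CellAdj m c ∧ Reach (S \ {c}) p m := by
  intro n
  induction n using Nat.strong_induction_on with
  | _ n IH =>
    intro l p hlen hw hp
    cases hw with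
    | single => exact absurd rfl hp
    | cons ha hadj hw' =>
      rename_i b l'
      by_cases hb : b = c
      · subst hb; exact ⟨p, ha, hp, hadj, Relation.ReflTransGen.refl⟩
      · obtain ⟨l2, rfl⟩ := walk_cons_form hw'
        obtain ⟨m, h1, h2, h3, h4⟩ := IH (b :: l2).length (by subst hlen; simp) _ b rfl hw' hb
        exact ⟨m, h1, h2, h3,
          Relation.ReflTransGen.head ⟨hadj, ⟨ha, hp⟩, ⟨walk_start_mem hw', hb⟩⟩ h4⟩

end PolyAux

namespace PolyAux

/-- crossing indicator for a step `u → v` w.r.t. the upward ray of `p`. -/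
def cr (u v p : Cell) : ZMod 2 :=
  if u.2 = v.2 ∧ p.2 < u.2 ∧ ((u.1 = p.1 ∧ v.1 = p.1 + 1) ∨ (u.1 = p.1 + 1 ∧ v.1 = p.1))
  then 1 else 0

def wind : List Cell → Cell → ZMod 2
  | [], _ => 0
  | [_], _ => 0
  | a :: b :: t, p => cr a b p + wind (b :: t) p

def edgeSum (g : Cell → ZMod 2) : List Cell → ZMod 2
  | [] => 0
  | [_] => 0
  | a :: b :: t => (g a + g b) + edgeSum g (b :: t)

def gfun (p z : Cell) : ZMod 2 := if z.1 = p.1 + 1 ∧ p.2 < z.2 then 1 else 0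

lemma zmod2_add_self : ∀ z : ZMod 2, z + z = 0 := by decide

lemma zmod2_cancel : ∀ {x y : ZMod 2}, x + y = 0 → x = y := by decide

lemma zmod2_mid (x y z : ZMod 2) : (x + y) + (y + z) = x + z := by revert x y z; decide

lemma edgeSum_walk {S : Set Cell} (g : Cell → ZMod 2) {p q : Cell} {l : List Cell}
    (h : Walk S p q l) : edgeSum g l = g p + g q := by
  induction h with
  | single a _ => simp [edgeSum, zmod2_add_self]
  | cons ha hadj hw ih =>
    obtain ⟨l', rfl⟩ := walk_cons_form hw
    simp only [edgeSum] at ih ⊢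
    rw [ih, zmod2_mid]

lemma wind_zero {S : Set Cell} {r : Cell}
    (h0 : ∀ u v : Cell, u ∈ S → v ∈ S → CellAdj u v → cr u v r = 0) :
    ∀ {p q : Cell} {l : List Cell}, Walk S p q l → wind l r = 0 := by
  intro p q l h
  induction h with
  | single a _ => rfl
  | cons ha hadj hw ih =>
    obtain ⟨l', rfl⟩ := walk_cons_form hw
    simp only [wind]
    rw [h0 _ _ ha (walk_start_mem hw) hadj, ih]; ring

lemma wind_congr {S : Set Cell} {r r' : Cell}
    (h0 : ∀ u v : Cell, u ∈ S → v ∈ S → CellAdj u v → cr u v r = cr u v r') :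
    ∀ {p q : Cell} {l : List Cell}, Walk S p q l → wind l r = wind l r' := by
  intro p q l h
  induction h with
  | single a _ => rfl
  | cons ha hadj hw ih =>
    obtain ⟨l', rfl⟩ := walk_cons_form hw
    simp only [wind]
    rw [h0 _ _ ha (walk_start_mem hw) hadj, ih]

lemma wind_pair {S : Set Cell} {r r' : Cell} (g : Cell → ZMod 2)
    (h0 : ∀ u v : Cell, u ∈ S → v ∈ S → CellAdj u v → cr u v r + cr u v r' = g u + g v) :
    ∀ {p q : Cell} {l : List Cell}, Walk S p q l →
      wind l r + wind l r' = edgeSum g l := by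
  intro p q l h
  induction h with
  | single a _ => rfl
  | cons ha hadj hw ih =>
    obtain ⟨l', rfl⟩ := walk_cons_form hw
    simp only [wind, edgeSum]
    rw [← ih, ← h0 _ _ ha (walk_start_mem hw) hadj]; ring

/-- vertical invariance. -/
lemma wind_vert {S : Set Cell} {p : Cell} (hq : (p.1, p.2 + 1) ∉ S)
    {a q : Cell} {l : List Cell} (h : Walk S a q l) :
    wind l p = wind l (p.1, p.2 + 1) := by
  refine wind_congr (fun u v hu hv hadj => ?_) h
  have hu' : ¬(u.1 = p.1 ∧ u.2 = p.2 + 1) := by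
    rintro ⟨h1, h2⟩
    exact hq (by obtain ⟨u1, u2⟩ := u; simp only at h1 h2; rw [← h1, ← h2]; exact hu)
  have hv' : ¬(v.1 = p.1 ∧ v.2 = p.2 + 1) := by
    rintro ⟨h1, h2⟩
    exact hq (by obtain ⟨v1, v2⟩ := v; simp only at h1 h2; rw [← h1, ← h2]; exact hv)
  obtain ⟨u1, u2⟩ := u; obtain ⟨v1, v2⟩ := v
  simp only [CellAdj] at hadj
  simp only [cr]
  split_ifs <;> first | rfl | (exfalso; omega)

/-- horizontal invariance, for a closed walk. -/
lemma wind_horiz {S : Set Cell} {p : Cell} (hq : (p.1 + 1, p.2) ∉ S)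
    {a : Cell} {l : List Cell} (h : Walk S a a l) :
    wind l p = wind l (p.1 + 1, p.2) := by
  apply zmod2_cancel
  have key : wind l p + wind l (p.1 + 1, p.2) = edgeSum (gfun p) l := by
    refine wind_pair (gfun p) (fun u v hu hv hadj => ?_) h
    have hu' : ¬(u.1 = p.1 + 1 ∧ u.2 = p.2) := by
      rintro ⟨h1, h2⟩
      exact hq (by obtain ⟨u1, u2⟩ := u; simp only at h1 h2; rw [← h1, ← h2]; exact hu)
    have hv' : ¬(v.1 = p.1 + 1 ∧ v.2 = p.2) := by
      rintro ⟨h1, h2⟩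
      exact hq (by obtain ⟨v1, v2⟩ := v; simp only at h1 h2; rw [← h1, ← h2]; exact hv)
    obtain ⟨u1, u2⟩ := u; obtain ⟨v1, v2⟩ := v
    simp only [CellAdj] at hadj
    simp only [cr, gfun]
    split_ifs <;> first | rfl | decide | (exfalso; omega)
  rw [key, edgeSum_walk (gfun p) h, zmod2_add_self]

end PolyAux

namespace PolyAux

lemma wind_snoc {S : Set Cell} {r x : Cell} :
    ∀ {p q : Cell} {l : List Cell}, Walk S p q l →
      wind (l ++ [x]) r = wind l r + cr q x r := by
  intro p q l h
  induction h with
  | single a _ => simp [wind, add_comm]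
  | cons ha hadj hw ih =>
    obtain ⟨l', rfl⟩ := walk_cons_form hw
    simp only [List.cons_append, List.append_eq, wind] at ih ⊢
    rw [ih, add_assoc]

lemma mem_compl_of_gt {Q : Finset Cell}
    (Hmax : ∀ q ∈ Q, q.1 < (c : Cell).1 ∨ (q.1 = c.1 ∧ q.2 ≤ c.2)) {z : Cell}
    (hz : c.1 < z.1 ∨ (c.1 = z.1 ∧ c.2 < z.2)) : z ∉ (↑Q : Set Cell) := by
  intro hmem
  rcases Hmax z hmem with h | h <;> omega

lemma reach_lift {T : Set Cell} {f : Cell → ZMod 2}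
    (inv : ∀ u v : Cell, CellAdj u v → u ∈ T → v ∈ T → f u = f v)
    {x y : Cell} (h : Reach T x y) : f x = f y := by
  induction h with
  | refl => rfl
  | tail _ hrel ih => exact ih.trans (inv _ _ hrel.1 hrel.2.1 hrel.2.2)

lemma no_reach_LD (Q : Finset Cell) (c : Cell) (hc : c ∈ Q)
    (Hmax : ∀ q ∈ Q, q.1 < c.1 ∨ (q.1 = c.1 ∧ q.2 ≤ c.2))
    (hdiag : (c.1 - 1, c.2 - 1) ∉ Q)
    (hcompl : ConnectedCells ((↑Q : Set Cell))ᶜ) :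
    ¬ Reach (↑(Q.erase c) : Set Cell) (c.1 - 1, c.2) (c.1, c.2 - 1) := by
  intro h
  obtain ⟨c1, c2⟩ := c
  simp only at h hdiag Hmax ⊢
  set S' : Set Cell := (↑(Q.erase (c1, c2)) : Set Cell) with hS'
  have hS'sub : S' ⊆ ↑Q := by
    rw [hS', Finset.coe_erase]; exact Set.diff_subset
  have hS'eq : S' = ↑Q \ {(c1, c2)} := by rw [hS', Finset.coe_erase]
  -- L ∈ S'
  have hLD : ((c1 - 1 : ℤ), c2) ≠ ((c1 : ℤ), c2 - 1) := by
    intro hh; rw [Prod.mk.injEq] at hh; omega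
  obtain ⟨b, hrel, -⟩ := (Relation.ReflTransGen.cases_head h).resolve_left hLD
  have hLmem : ((c1 - 1 : ℤ), (c2 : ℤ)) ∈ S' := hrel.2.1
  obtain ⟨l, hl⟩ := reach_to_walk h hLmem
  have hwQ : Walk (↑Q) ((c1 - 1 : ℤ), (c2:ℤ)) ((c1:ℤ), (c2 - 1 : ℤ)) l := walk_mono hS'sub hl
  -- the closed walk
  have hW : Walk (↑Q) (c1, c2) (c1, c2) ((c1, c2) :: (l ++ [(c1, c2)])) := by
    refine Walk.cons (Finset.mem_coe.2 hc) cellAdj_horiz ?_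
    exact walk_snoc (Finset.mem_coe.2 hc) hwQ (cellAdj_symm cellAdj_vert)
  -- value at diag
  have hval : wind ((c1, c2) :: (l ++ [(c1, c2)])) (c1 - 1, c2 - 1) = 1 := by
    obtain ⟨l', rfl⟩ := walk_cons_form hl
    have h1 : wind ((((c1 - 1 : ℤ), (c2:ℤ)) :: l') ++ [(c1, c2)]) (c1 - 1, c2 - 1)
        = wind (((c1 - 1 : ℤ), (c2:ℤ)) :: l') (c1 - 1, c2 - 1)
          + cr ((c1:ℤ), (c2 - 1:ℤ)) (c1, c2) (c1 - 1, c2 - 1) := wind_snoc hwQ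
    have h2 : wind (((c1 - 1 : ℤ), (c2:ℤ)) :: l') (c1 - 1, c2 - 1) = 0 := by
      refine wind_zero (S := S') (fun u v hu hv hadj => ?_) hl
      rw [hS'eq] at hu hv
      obtain ⟨u1, u2⟩ := u; obtain ⟨v1, v2⟩ := v
      have hu1 : ¬(u1 = c1 ∧ u2 = c2) := by
        rintro ⟨rfl, rfl⟩; exact hu.2 rfl
      have hv1 : ¬(v1 = c1 ∧ v2 = c2) := by
        rintro ⟨rfl, rfl⟩; exact hv.2 rfl
      have hu2 := Hmax _ hu.1
      have hv2 := Hmax _ hv.1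
      simp only at hu2 hv2
      simp only [cr]
      split_ifs with hcond
      · exfalso; omega
      · rfl
    have h3 : cr ((c1:ℤ), (c2 - 1:ℤ)) (c1, c2) (c1 - 1, c2 - 1) = 0 := by
      simp only [cr]
      split_ifs with hcond
      · exfalso; omega
      · rfl
    have h4 : cr ((c1:ℤ), (c2:ℤ)) ((c1 - 1 : ℤ), (c2:ℤ)) (c1 - 1, c2 - 1) = 1 := by
      simp only [cr]
      split_ifs with hcond
      · rfl
      · exact absurd ⟨trivial, show (c2 : ℤ) - 1 < c2 by omega,
          Or.inr ⟨show (c1 : ℤ) = (c1 - 1) + 1 by omega, trivial⟩⟩ hcond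
    simp only [List.cons_append, List.append_eq, wind] at h1 ⊢
    rw [h1, h2, h3, h4]
    rfl
  -- value at far cell
  have hfar : wind ((c1, c2) :: (l ++ [(c1, c2)])) (c1 + 1, c2) = 0 := by
    refine wind_zero (S := (↑Q : Set Cell)) (fun u v hu hv hadj => ?_) hW
    obtain ⟨u1, u2⟩ := u; obtain ⟨v1, v2⟩ := v
    have hu2 := Hmax _ hu
    have hv2 := Hmax _ hv
    simp only at hu2 hv2
    simp only [cr]
    split_ifs with hcond
    · exfalso; omega
    · rfl
  -- invariance along the complement
  have inv : ∀ u v : Cell, CellAdj u v → u ∉ (↑Q : Set Cell) → v ∉ (↑Q : Set Cell) →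
      wind ((c1, c2) :: (l ++ [(c1, c2)])) u = wind ((c1, c2) :: (l ++ [(c1, c2)])) v := by
    intro u v hadj hu hv
    rcases cellAdj_cases hadj with hv' | hv' | hv' | hv'
    · have : v = (u.1 + 1, u.2) := hv'
      rw [this]
      exact wind_horiz (by rw [← this]; exact hv) hW
    · have hu' : u = (v.1 + 1, v.2) := by
        obtain ⟨u1, u2⟩ := u; obtain ⟨v1, v2⟩ := v
        simp only [Prod.mk.injEq] at hv' ⊢; omega
      rw [hu']
      exact (wind_horiz (by rw [← hu']; exact hu) hW).symm
    · have : v = (u.1, u.2 + 1) := hv'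
      rw [this]
      exact wind_vert (by rw [← this]; exact hv) hW
    · have hu' : u = (v.1, v.2 + 1) := by
        obtain ⟨u1, u2⟩ := u; obtain ⟨v1, v2⟩ := v
        simp only [Prod.mk.injEq] at hv' ⊢; omega
      rw [hu']
      exact (wind_vert (by rw [← hu']; exact hu) hW).symm
  have hdiagc : ((c1 - 1 : ℤ), (c2 - 1 : ℤ)) ∈ ((↑Q : Set Cell))ᶜ := by
    intro hx; exact hdiag hx
  have hfarc : ((c1 + 1 : ℤ), (c2 : ℤ)) ∈ ((↑Q : Set Cell))ᶜ := by
    intro hx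
    rcases Hmax _ hx with h' | h' <;> simp only at h' <;> omega
  have hreach : Reach ((↑Q : Set Cell))ᶜ ((c1 - 1 : ℤ), (c2 - 1:ℤ)) ((c1 + 1:ℤ), (c2:ℤ)) :=
    hcompl _ hdiagc _ hfarc
  have heq : wind ((c1, c2) :: (l ++ [(c1, c2)])) ((c1 - 1 : ℤ), (c2 - 1:ℤ))
      = wind ((c1, c2) :: (l ++ [(c1, c2)])) ((c1 + 1:ℤ), (c2:ℤ)) :=
    reach_lift inv hreach
  rw [hval, hfar] at heq
  exact absurd heq (by decide)

end PolyAux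

namespace PolyAux

open Finset

def wloc (p : Cell) (S : Finset Cell) : ℕ :=
  1 + (if (p.1, p.2 - 1) ∈ S then 1 else 0) + (if (p.1 - 1, p.2) ∈ S then 1 else 0)
    + (if (p.1, p.2 - 1) ∈ S ∧ (p.1 - 1, p.2) ∈ S ∧ (p.1 - 1, p.2 - 1) ∈ S then 1 else 0)

def N (S : Finset Cell) : ℕ := ∑ p ∈ S, wloc p S

lemma mem_scale2 {Q : Finset Cell} {x y a b : ℤ} (hx : x = 2*a ∨ x = 2*a+1)
    (hy : y = 2*b ∨ y = 2*b+1) : ((x, y) ∈ scale2 Q ↔ (a, b) ∈ Q) := by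
  simp only [scale2, Finset.mem_biUnion, Finset.mem_insert, Finset.mem_singleton,
    Prod.mk.injEq]
  constructor
  · rintro ⟨⟨p1, p2⟩, hp, hcase⟩
    simp only at hcase
    have h1 : p1 = a ∧ p2 = b := by omega
    rw [← h1.1, ← h1.2]; exact hp
  · intro hab
    exact ⟨(a, b), hab, by simp only; omega⟩

lemma mem_iv {P : Finset Cell} {x y : ℤ} :
    (x, y) ∈ interiorVertices P ↔
      ((x, y) ∈ P ∧ (x - 1, y) ∈ P ∧ (x, y - 1) ∈ P ∧ (x - 1, y - 1) ∈ P) := by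
  simp [interiorVertices, Finset.mem_filter]

lemma mX_oo {Q : Finset Cell} {a b : ℤ} :
    ((2*a+1, 2*b+1) ∈ interiorVertices (scale2 Q)) ↔ (a, b) ∈ Q := by
  rw [mem_iv,
    mem_scale2 (x := 2*a+1) (a := a) (b := b) (by omega) (by omega),
    mem_scale2 (x := 2*a+1-1) (a := a) (b := b) (by omega) (by omega),
    mem_scale2 (x := 2*a+1) (y := 2*b+1-1) (a := a) (b := b) (by omega) (by omega),
    mem_scale2 (x := 2*a+1-1) (y := 2*b+1-1) (a := a) (b := b) (by omega) (by omega)]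
  tauto

lemma mX_oe {Q : Finset Cell} {a b : ℤ} :
    ((2*a+1, 2*b) ∈ interiorVertices (scale2 Q)) ↔ ((a, b) ∈ Q ∧ (a, b - 1) ∈ Q) := by
  rw [mem_iv,
    mem_scale2 (x := 2*a+1) (y := 2*b) (a := a) (b := b) (by omega) (by omega),
    mem_scale2 (x := 2*a+1-1) (y := 2*b) (a := a) (b := b) (by omega) (by omega),
    mem_scale2 (x := 2*a+1) (y := 2*b-1) (a := a) (b := b - 1) (by omega) (by omega),
    mem_scale2 (x := 2*a+1-1) (y := 2*b-1) (a := a) (b := b - 1) (by omega) (by omega)]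
  tauto

lemma mX_eo {Q : Finset Cell} {a b : ℤ} :
    ((2*a, 2*b+1) ∈ interiorVertices (scale2 Q)) ↔ ((a, b) ∈ Q ∧ (a - 1, b) ∈ Q) := by
  rw [mem_iv,
    mem_scale2 (x := 2*a) (y := 2*b+1) (a := a) (b := b) (by omega) (by omega),
    mem_scale2 (x := 2*a-1) (y := 2*b+1) (a := a - 1) (b := b) (by omega) (by omega),
    mem_scale2 (x := 2*a) (y := 2*b+1-1) (a := a) (b := b) (by omega) (by omega),
    mem_scale2 (x := 2*a-1) (y := 2*b+1-1) (a := a - 1) (b := b) (by omega) (by omega)]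
  tauto

lemma mX_ee {Q : Finset Cell} {a b : ℤ} :
    ((2*a, 2*b) ∈ interiorVertices (scale2 Q)) ↔
      ((a, b) ∈ Q ∧ (a, b - 1) ∈ Q ∧ (a - 1, b) ∈ Q ∧ (a - 1, b - 1) ∈ Q) := by
  rw [mem_iv,
    mem_scale2 (x := 2*a) (y := 2*b) (a := a) (b := b) (by omega) (by omega),
    mem_scale2 (x := 2*a-1) (y := 2*b) (a := a - 1) (b := b) (by omega) (by omega),
    mem_scale2 (x := 2*a) (y := 2*b-1) (a := a) (b := b - 1) (by omega) (by omega),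
    mem_scale2 (x := 2*a-1) (y := 2*b-1) (a := a - 1) (b := b - 1) (by omega) (by omega)]
  tauto

lemma cardA (Q : Finset Cell) : (interiorVertices (scale2 Q)).card = N Q := by
  classical
  have hfib : ∀ v ∈ interiorVertices (scale2 Q),
      (fun v : Cell => ((v.1 / 2 : ℤ), (v.2 / 2 : ℤ))) v ∈ Q := by
    rintro ⟨x, y⟩ hv
    have hs : (x, y) ∈ scale2 Q := (Finset.mem_filter.1 hv).1
    simp only [scale2, Finset.mem_biUnion, Finset.mem_insert, Finset.mem_singleton,
      Prod.mk.injEq] at hs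
    obtain ⟨⟨p1, p2⟩, hp, hcase⟩ := hs
    simp only at hcase ⊢
    have h1 : x / 2 = p1 ∧ y / 2 = p2 := by omega
    rw [h1.1, h1.2]; exact hp
  rw [Finset.card_eq_sum_card_fiberwise hfib]
  unfold N
  apply Finset.sum_congr rfl
  rintro ⟨a, b⟩ hp
  have hset : (interiorVertices (scale2 Q)).filter
        (fun v : Cell => ((v.1 / 2 : ℤ), (v.2 / 2 : ℤ)) = (a, b))
      = ({(2*a+1, 2*b+1), (2*a+1, 2*b), (2*a, 2*b+1), (2*a, 2*b)} : Finset Cell).filter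
          (fun v => v ∈ interiorVertices (scale2 Q)) := by
    ext ⟨x, y⟩
    simp only [Finset.mem_filter, Finset.mem_insert, Finset.mem_singleton, Prod.mk.injEq]
    constructor
    · rintro ⟨hmem, heq⟩
      exact ⟨by omega, hmem⟩
    · rintro ⟨hcases, hmem⟩
      exact ⟨hmem, by omega⟩
  rw [hset, Finset.card_filter]
  have hne1 : ((2*a+1 : ℤ), (2*b+1 : ℤ)) ∉
      ({(2*a+1, 2*b), (2*a, 2*b+1), (2*a, 2*b)} : Finset Cell) := by
    simp only [Finset.mem_insert, Finset.mem_singleton, Prod.mk.injEq]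
    omega
  have hne2 : ((2*a+1 : ℤ), (2*b : ℤ)) ∉ ({(2*a, 2*b+1), (2*a, 2*b)} : Finset Cell) := by
    simp only [Finset.mem_insert, Finset.mem_singleton, Prod.mk.injEq]
    omega
  have hne3 : ((2*a : ℤ), (2*b+1 : ℤ)) ∉ ({(2*a, 2*b)} : Finset Cell) := by
    simp only [Finset.mem_singleton, Prod.mk.injEq]
    omega
  rw [Finset.sum_insert hne1, Finset.sum_insert hne2, Finset.sum_insert hne3,
    Finset.sum_singleton]
  by_cases h1 : (a, b - 1) ∈ Q <;> by_cases h2 : (a - 1, b) ∈ Q <;>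
    by_cases h3 : (a - 1, b - 1) ∈ Q <;>
    simp [mX_oo, mX_oe, mX_eo, mX_ee, wloc, hp, h1, h2, h3]

end PolyAux

namespace PolyAux

open Finset

lemma adjR (c : Cell) : CellAdj c (c.1 + 1, c.2) := by
  obtain ⟨x, y⟩ := c; exact cellAdj_horiz'
lemma adjL (c : Cell) : CellAdj c (c.1 - 1, c.2) := by
  obtain ⟨x, y⟩ := c; exact cellAdj_horiz
lemma adjD (c : Cell) : CellAdj c (c.1, c.2 - 1) := by
  obtain ⟨x, y⟩ := c; exact cellAdj_vert
lemma adjU (c : Cell) : CellAdj c (c.1, c.2 + 1) := by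
  obtain ⟨x, y⟩ := c; exact cellAdj_vert'

lemma N_erase {Q : Finset Cell} {c : Cell} (hc : c ∈ Q)
    (hU : (c.1, c.2 + 1) ∉ Q) (hR : (c.1 + 1, c.2) ∉ Q) (hUR : (c.1 + 1, c.2 + 1) ∉ Q) :
    N Q = N (Q.erase c) + wloc c Q := by
  unfold N
  rw [← Finset.sum_erase_add _ _ hc]
  congr 1
  apply Finset.sum_congr rfl
  intro p hp
  have hpQ := Finset.mem_of_mem_erase hp
  have e1 : ((p.1, p.2 - 1) ∈ Q) ↔ ((p.1, p.2 - 1) ∈ Q.erase c) := by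
    rw [Finset.mem_erase]
    constructor
    · intro hm
      refine ⟨fun he => ?_, hm⟩
      rw [Prod.ext_iff] at he
      simp only at he
      apply hU
      have hpe : p = (c.1, c.2 + 1) := by rw [Prod.ext_iff]; constructor <;> simp <;> omega
      rw [← hpe]; exact hpQ
    · exact And.right
  have e2 : ((p.1 - 1, p.2) ∈ Q) ↔ ((p.1 - 1, p.2) ∈ Q.erase c) := by
    rw [Finset.mem_erase]
    constructor
    · intro hm
      refine ⟨fun he => ?_, hm⟩
      rw [Prod.ext_iff] at he
      simp only at he
      apply hR
      have hpe : p = (c.1 + 1, c.2) := by rw [Prod.ext_iff]; constructor <;> simp <;> omega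
      rw [← hpe]; exact hpQ
    · exact And.right
  have e3 : ((p.1 - 1, p.2 - 1) ∈ Q) ↔ ((p.1 - 1, p.2 - 1) ∈ Q.erase c) := by
    rw [Finset.mem_erase]
    constructor
    · intro hm
      refine ⟨fun he => ?_, hm⟩
      rw [Prod.ext_iff] at he
      simp only at he
      apply hUR
      have hpe : p = (c.1 + 1, c.2 + 1) := by rw [Prod.ext_iff]; constructor <;> simp <;> omega
      rw [← hpe]; exact hpQ
    · exact And.right
  unfold wloc
  simp only [e1, e2, e3]

/-- The generic "local weights don't change" lemma for a closed part `C` of `Q`. -/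
lemma wloc_comp {Q C : Finset Cell} {c : Cell} (hc : c ∈ Q)
    (hU : (c.1, c.2 + 1) ∉ Q) (hUR : (c.1 + 1, c.2 + 1) ∉ Q)
    (hCQ : ∀ p ∈ C, p ∈ Q)
    (hclose : ∀ p ∈ C, ∀ z : Cell, z ∈ Q → z ≠ c → CellAdj p z → z ∈ C) :
    ∀ p ∈ C, wloc p Q = wloc p (insert c C) := by
  intro p hp
  have hpQ := hCQ p hp
  have e1 : ((p.1, p.2 - 1) ∈ Q) ↔ ((p.1, p.2 - 1) ∈ insert c C) := by
    constructor
    · intro hm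
      by_cases hzc : (p.1, p.2 - 1) = c
      · rw [hzc]; exact Finset.mem_insert_self _ _
      · exact Finset.mem_insert_of_mem (hclose p hp _ hm hzc (adjD p))
    · intro hm
      rcases Finset.mem_insert.1 hm with h | h
      · rw [h]; exact hc
      · exact hCQ _ h
  have e2 : ((p.1 - 1, p.2) ∈ Q) ↔ ((p.1 - 1, p.2) ∈ insert c C) := by
    constructor
    · intro hm
      by_cases hzc : (p.1 - 1, p.2) = c
      · rw [hzc]; exact Finset.mem_insert_self _ _
      · exact Finset.mem_insert_of_mem (hclose p hp _ hm hzc (adjL p))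
    · intro hm
      rcases Finset.mem_insert.1 hm with h | h
      · rw [h]; exact hc
      · exact hCQ _ h
  have e3 : (((p.1, p.2 - 1) ∈ insert c C ∧ (p.1 - 1, p.2) ∈ insert c C ∧
        (p.1 - 1, p.2 - 1) ∈ Q)) ↔
      ((p.1, p.2 - 1) ∈ insert c C ∧ (p.1 - 1, p.2) ∈ insert c C ∧
        (p.1 - 1, p.2 - 1) ∈ insert c C) := by
    constructor
    · rintro ⟨h1, h2, h3⟩
      have hdownC : (p.1, p.2 - 1) ∈ C := by
        rcases Finset.mem_insert.1 h1 with h | h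
        · exfalso
          rw [Prod.ext_iff] at h; simp only at h
          apply hU
          have hpe : p = (c.1, c.2 + 1) := by
            rw [Prod.ext_iff]; constructor <;> simp <;> omega
          rw [← hpe]; exact hpQ
        · exact h
      have hdgC : (p.1 - 1, p.2 - 1) ∈ C := by
        have hdc : (p.1 - 1, p.2 - 1) ≠ c := by
          intro he
          rw [Prod.ext_iff] at he; simp only at he
          apply hUR
          have hpe : p = (c.1 + 1, c.2 + 1) := by
            rw [Prod.ext_iff]; constructor <;> simp <;> omega
          rw [← hpe]; exact hpQ
        refine hclose _ hdownC _ h3 hdc ?_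
        exact cellAdj_horiz
      exact ⟨h1, h2, Finset.mem_insert_of_mem hdgC⟩
    · rintro ⟨h1, h2, h3⟩
      refine ⟨h1, h2, ?_⟩
      rcases Finset.mem_insert.1 h3 with h | h
      · rw [h]; exact hc
      · exact hCQ _ h
  unfold wloc
  simp only [e1, e2, e3]

end PolyAux

namespace PolyAux

lemma erase_poly {Q : Finset Cell} {c : Cell} (hconn : ConnectedCells (↑Q : Set Cell))
    (hcompl : ConnectedCells ((↑Q : Set Cell))ᶜ) (hc : c ∈ Q)
    (hR : (c.1 + 1, c.2) ∉ Q) (hne : (Q.erase c).Nonempty)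
    (Hbyp : ∀ u v : Cell, u ∈ (↑Q : Set Cell) \ {c} → v ∈ (↑Q : Set Cell) \ {c} →
      CellAdj u c → CellAdj c v → Reach ((↑Q : Set Cell) \ {c}) u v) :
    IsPolyomino (Q.erase c) := by
  have hcoe : (↑(Q.erase c) : Set Cell) = (↑Q : Set Cell) \ {c} := Finset.coe_erase c Q
  refine ⟨hne, ?_, ?_⟩
  · intro p hp q hq
    rw [hcoe] at hp hq
    have hre : Reach (↑Q) p q := hconn p hp.1 q hq.1
    obtain ⟨l, hl⟩ := reach_to_walk hre hp.1
    have hres := surgery Hbyp l.length l p q rfl hl hp.2 hq.2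
    show Reach (↑(Q.erase c)) p q
    rw [hcoe]
    exact hres
  · intro p hp q hq
    rw [hcoe] at hp hq
    have hsub : ((↑Q : Set Cell))ᶜ ⊆ ((↑Q : Set Cell) \ {c})ᶜ := by
      intro z hz hz2; exact hz hz2.1
    have hRc : ((c.1 + 1, c.2) : Cell) ∈ ((↑Q : Set Cell))ᶜ := hR
    have toR : ∀ x : Cell, x ∈ ((↑Q : Set Cell) \ {c})ᶜ →
        Reach ((↑Q : Set Cell) \ {c})ᶜ x (c.1 + 1, c.2) := by
      intro x hx
      by_cases hxQ : x ∈ (↑Q : Set Cell)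
      · have hxc : x = c := by
          by_contra hxc
          exact hx ⟨hxQ, hxc⟩
        subst hxc
        refine Relation.ReflTransGen.single ⟨adjR x, ?_, ?_⟩
        · intro hmem; exact hmem.2 rfl
        · exact hsub hRc
      · exact reach_mono hsub (hcompl x hxQ _ hRc)
    have hgoal : Reach ((↑Q : Set Cell) \ {c})ᶜ p q := (toR p hp).trans (reach_symm (toR q hq))
    show Reach ((↑(Q.erase c) : Set Cell))ᶜ p q
    rw [hcoe]
    exact hgoal

end PolyAux

namespace PolyAux

lemma mkAdj {x1 y1 x2 y2 : ℤ}
    (h : (x1 = x2 ∧ (y1 = y2 + 1 ∨ y2 = y1 + 1)) ∨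
      (y1 = y2 ∧ (x1 = x2 + 1 ∨ x2 = x1 + 1))) : CellAdj (x1, y1) (x2, y2) := h

lemma split_case {Q : Finset Cell} {c : Cell} {n : ℕ}
    (IH : ∀ m, m < n → ∀ Q' : Finset Cell, Q'.card = m → IsPolyomino Q' → Odd (N Q'))
    (hcard : Q.card = n)
    (hconn : ConnectedCells (↑Q : Set Cell))
    (hcompl : ConnectedCells ((↑Q : Set Cell))ᶜ)
    (hcQ : c ∈ Q)
    (Hmax : ∀ q ∈ Q, q.1 < c.1 ∨ (q.1 = c.1 ∧ q.2 ≤ c.2))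
    (hU : (c.1, c.2 + 1) ∉ Q) (hR : (c.1 + 1, c.2) ∉ Q) (hUR : (c.1 + 1, c.2 + 1) ∉ Q)
    (hnbr : ∀ m : Cell, m ∈ Q → CellAdj m c →
      m = (c.1 - 1, c.2) ∨ m = (c.1, c.2 - 1))
    (hLc : ((c.1 - 1, c.2) : Cell) ≠ c) (hDc : ((c.1, c.2 - 1) : Cell) ≠ c)
    (hL : (c.1 - 1, c.2) ∈ Q) (hD : (c.1, c.2 - 1) ∈ Q)
    (hdiag : (c.1 - 1, c.2 - 1) ∉ Q) : Odd (N Q) := by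
  classical
  have hnLD : ¬ Reach ((↑Q : Set Cell) \ {c}) (c.1 - 1, c.2) (c.1, c.2 - 1) := by
    have h := no_reach_LD Q c hcQ Hmax hdiag hcompl
    rw [Finset.coe_erase] at h
    exact h
  have hcS' : c ∉ (↑Q : Set Cell) \ {c} := fun h => h.2 rfl
  have hLS' : ((c.1 - 1, c.2) : Cell) ∈ (↑Q : Set Cell) \ {c} := ⟨hL, hLc⟩
  have hDS' : ((c.1, c.2 - 1) : Cell) ∈ (↑Q : Set Cell) \ {c} := ⟨hD, hDc⟩
  set A : Finset Cell :=
    Q.filter (fun p => Reach ((↑Q : Set Cell) \ {c}) (c.1 - 1, c.2) p) with hAdef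
  set B : Finset Cell :=
    Q.filter (fun p => Reach ((↑Q : Set Cell) \ {c}) (c.1, c.2 - 1) p) with hBdef
  have hAQ : ∀ p ∈ A, p ∈ Q := fun p hp => (Finset.mem_filter.1 hp).1
  have hBQ : ∀ p ∈ B, p ∈ Q := fun p hp => (Finset.mem_filter.1 hp).1
  have hAr : ∀ p ∈ A, Reach ((↑Q : Set Cell) \ {c}) (c.1 - 1, c.2) p :=
    fun p hp => (Finset.mem_filter.1 hp).2
  have hBr : ∀ p ∈ B, Reach ((↑Q : Set Cell) \ {c}) (c.1, c.2 - 1) p :=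
    fun p hp => (Finset.mem_filter.1 hp).2
  have hAS' : ∀ p ∈ A, p ∈ (↑Q : Set Cell) \ {c} := by
    intro p hp
    rcases mem_of_reach (hAr p hp) with h | h
    · rw [← h]; exact hLS'
    · exact h
  have hBS' : ∀ p ∈ B, p ∈ (↑Q : Set Cell) \ {c} := by
    intro p hp
    rcases mem_of_reach (hBr p hp) with h | h
    · rw [← h]; exact hDS'
    · exact h
  have hAB : ∀ p, p ∈ A → p ∈ B → False := fun p hpA hpB =>
    hnLD ((hAr p hpA).trans (reach_symm (hBr p hpB)))
  have hcA : c ∉ A := fun h => hcS' (hAS' _ h)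
  have hcB : c ∉ B := fun h => hcS' (hBS' _ h)
  have hLA : (c.1 - 1, c.2) ∈ A := Finset.mem_filter.2 ⟨hL, Relation.ReflTransGen.refl⟩
  have hDB : (c.1, c.2 - 1) ∈ B := Finset.mem_filter.2 ⟨hD, Relation.ReflTransGen.refl⟩
  have hAclose : ∀ p ∈ A, ∀ z : Cell, z ∈ Q → z ≠ c → CellAdj p z → z ∈ A := by
    intro p hp z hz hzc hadj
    exact Finset.mem_filter.2 ⟨hz, (hAr p hp).tail ⟨hadj, hAS' p hp, ⟨hz, hzc⟩⟩⟩
  have hBclose : ∀ p ∈ B, ∀ z : Cell, z ∈ Q → z ≠ c → CellAdj p z → z ∈ B := by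
    intro p hp z hz hzc hadj
    exact Finset.mem_filter.2 ⟨hz, (hBr p hp).tail ⟨hadj, hBS' p hp, ⟨hz, hzc⟩⟩⟩
  have hcover : ∀ q ∈ Q, q ≠ c → q ∈ A ∨ q ∈ B := by
    intro q hq hqc
    have hre : Reach (↑Q) q c := hconn q hq c hcQ
    obtain ⟨l, hl⟩ := reach_to_walk hre hq
    obtain ⟨m, hmQ, hmc, hmadj, hreach'⟩ := truncate l.length l q rfl hl hqc
    rcases hnbr m hmQ hmadj with h | h
    · exact Or.inl (Finset.mem_filter.2 ⟨hq, reach_symm (h ▸ hreach')⟩)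
    · exact Or.inr (Finset.mem_filter.2 ⟨hq, reach_symm (h ▸ hreach')⟩)
  have hreachA : ∀ p ∈ A, Reach (↑A : Set Cell) (c.1 - 1, c.2) p := by
    intro p hp
    refine reach_mono ?_ (reach_restrict (hAr p hp))
    intro z hz
    exact Finset.mem_coe.2 (Finset.mem_filter.2 ⟨hz.1.1, hz.2⟩)
  have hreachB : ∀ p ∈ B, Reach (↑B : Set Cell) (c.1, c.2 - 1) p := by
    intro p hp
    refine reach_mono ?_ (reach_restrict (hBr p hp))
    intro z hz
    exact Finset.mem_coe.2 (Finset.mem_filter.2 ⟨hz.1.1, hz.2⟩)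
  have hA'Q : ∀ p ∈ insert c A, p ∈ Q := by
    intro p hp; rcases Finset.mem_insert.1 hp with h | h
    · rw [h]; exact hcQ
    · exact hAQ _ h
  have hB'Q : ∀ p ∈ insert c B, p ∈ Q := by
    intro p hp; rcases Finset.mem_insert.1 hp with h | h
    · rw [h]; exact hcQ
    · exact hBQ _ h
  have hDA' : (c.1, c.2 - 1) ∉ insert c A := by
    intro h; rcases Finset.mem_insert.1 h with h | h
    · exact hDc h
    · exact hAB _ h hDB
  have hLB' : (c.1 - 1, c.2) ∉ insert c B := by
    intro h; rcases Finset.mem_insert.1 h with h | h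
    · exact hLc h
    · exact hAB _ hLA h
  have hA'sub : (↑A : Set Cell) ⊆ ↑(insert c A) := by
    intro z hz; exact Finset.mem_coe.2 (Finset.mem_insert_of_mem (Finset.mem_coe.1 hz))
  have hB'sub : (↑B : Set Cell) ⊆ ↑(insert c B) := by
    intro z hz; exact Finset.mem_coe.2 (Finset.mem_insert_of_mem (Finset.mem_coe.1 hz))
  -- connectivity of the two halves
  have hA'conn : ConnectedCells (↑(insert c A) : Set Cell) := by
    have key : ∀ p ∈ (↑(insert c A) : Set Cell), Reach (↑(insert c A) : Set Cell) c p := by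
      intro p hp
      rcases Finset.mem_insert.1 (Finset.mem_coe.1 hp) with h | h
      · rw [h]; exact Relation.ReflTransGen.refl
      · refine Relation.ReflTransGen.head
          ⟨adjL c, Finset.mem_coe.2 (Finset.mem_insert_self c A),
            Finset.mem_coe.2 (Finset.mem_insert_of_mem hLA)⟩
          (reach_mono hA'sub (hreachA p h))
    intro p hp q hq
    exact (reach_symm (key p hp)).trans (key q hq)
  have hB'conn : ConnectedCells (↑(insert c B) : Set Cell) := by
    have key : ∀ p ∈ (↑(insert c B) : Set Cell), Reach (↑(insert c B) : Set Cell) c p := by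
      intro p hp
      rcases Finset.mem_insert.1 (Finset.mem_coe.1 hp) with h | h
      · rw [h]; exact Relation.ReflTransGen.refl
      · refine Relation.ReflTransGen.head
          ⟨adjD c, Finset.mem_coe.2 (Finset.mem_insert_self c B),
            Finset.mem_coe.2 (Finset.mem_insert_of_mem hDB)⟩
          (reach_mono hB'sub (hreachB p h))
    intro p hp q hq
    exact (reach_symm (key p hp)).trans (key q hq)
  -- complement of A'
  have hQc_subA : ((↑Q : Set Cell))ᶜ ⊆ ((↑(insert c A) : Set Cell))ᶜ := by
    intro z hz hzA; exact hz (hA'Q z (Finset.mem_coe.1 hzA))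
  have hQc_subB : ((↑Q : Set Cell))ᶜ ⊆ ((↑(insert c B) : Set Cell))ᶜ := by
    intro z hz hzB; exact hz (hB'Q z (Finset.mem_coe.1 hzB))
  have hBsubA'c : (↑B : Set Cell) ⊆ ((↑(insert c A) : Set Cell))ᶜ := by
    intro z hz hzA'
    rcases Finset.mem_insert.1 (Finset.mem_coe.1 hzA') with h | h
    · exact hcB (h ▸ Finset.mem_coe.1 hz)
    · exact hAB z h (Finset.mem_coe.1 hz)
  have hAsubB'c : (↑A : Set Cell) ⊆ ((↑(insert c B) : Set Cell))ᶜ := by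
    intro z hz hzB'
    rcases Finset.mem_insert.1 (Finset.mem_coe.1 hzB') with h | h
    · exact hcA (h ▸ Finset.mem_coe.1 hz)
    · exact hAB z (Finset.mem_coe.1 hz) h
  have hA'compl : ConnectedCells ((↑(insert c A) : Set Cell))ᶜ := by
    have toC : ∀ x ∈ ((↑(insert c A) : Set Cell))ᶜ, ∃ r, r ∈ ((↑Q : Set Cell))ᶜ ∧
        Reach ((↑(insert c A) : Set Cell))ᶜ x r := by
      intro x hx
      by_cases hxQ : x ∈ Q
      · have hxc : x ≠ c := by
          intro hxeq; rw [hxeq] at hx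
          exact hx (Finset.mem_coe.2 (Finset.mem_insert_self c A))
        have hxB : x ∈ B := by
          rcases hcover x hxQ hxc with h | h
          · exact absurd (Finset.mem_coe.2 (Finset.mem_insert_of_mem h)) hx
          · exact h
        have hDrQ : ((c.1 + 1, c.2 - 1) : Cell) ∉ (↑Q : Set Cell) := by
          intro h; have := Hmax _ h; simp only at this; omega
        refine ⟨(c.1 + 1, c.2 - 1), hDrQ, ?_⟩
        refine (reach_symm (reach_mono hBsubA'c (hreachB x hxB))).tail
          ⟨mkAdj (by omega), hBsubA'c (Finset.mem_coe.2 hDB), hQc_subA hDrQ⟩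
      · exact ⟨x, hxQ, Relation.ReflTransGen.refl⟩
    intro p hp q hq
    obtain ⟨rp, hrp, hp1⟩ := toC p hp
    obtain ⟨rq, hrq, hq1⟩ := toC q hq
    exact hp1.trans ((reach_mono hQc_subA (hcompl rp hrp rq hrq)).trans (reach_symm hq1))
  -- lex max of A, to escape from A to the complement
  have hAne : A.Nonempty := ⟨_, hLA⟩
  obtain ⟨m1', hm1'A, hmaxA1⟩ := Finset.exists_max_image A (fun p => p.1) hAne
  have hTAne : (A.filter (fun p => p.1 = m1'.1)).Nonempty :=
    ⟨m1', Finset.mem_filter.2 ⟨hm1'A, rfl⟩⟩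
  obtain ⟨m, hmT, hmaxA2⟩ := Finset.exists_max_image _ (fun p => p.2) hTAne
  have hmA : m ∈ A := (Finset.mem_filter.1 hmT).1
  have hm1 : m.1 = m1'.1 := (Finset.mem_filter.1 hmT).2
  have HmaxA : ∀ q ∈ A, q.1 < m.1 ∨ (q.1 = m.1 ∧ q.2 ≤ m.2) := by
    intro q hq
    have h1 := hmaxA1 q hq
    by_cases h2 : q.1 = m.1
    · exact Or.inr ⟨h2, hmaxA2 q (Finset.mem_filter.2 ⟨hq, by omega⟩)⟩
    · exact Or.inl (by omega)
  have ht : ∃ t : Cell, t ∉ Q ∧ CellAdj m t := by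
    by_cases htR : (m.1 + 1, m.2) ∈ Q
    · have hmc : ((m.1 + 1, m.2) : Cell) = c := by
        by_contra hne'
        have hmem : (m.1 + 1, m.2) ∈ A := hAclose m hmA _ htR hne' (adjR m)
        have := HmaxA _ hmem; simp only at this; omega
      have hm1c : m.1 = c.1 - 1 ∧ m.2 = c.2 := by
        rw [Prod.ext_iff] at hmc; simp only at hmc; omega
      have hUm : (m.1, m.2 + 1) ∉ Q := by
        intro hmem
        have hne2 : ((m.1, m.2 + 1) : Cell) ≠ c := by
          intro h; rw [Prod.ext_iff] at h; simp only at h; omega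
        have hmem2 : (m.1, m.2 + 1) ∈ A := hAclose m hmA _ hmem hne2 (adjU m)
        have := HmaxA _ hmem2; simp only at this; omega
      exact ⟨(m.1, m.2 + 1), hUm, adjU m⟩
    · exact ⟨(m.1 + 1, m.2), htR, adjR m⟩
  obtain ⟨t, htQ, htadj⟩ := ht
  have hB'compl : ConnectedCells ((↑(insert c B) : Set Cell))ᶜ := by
    have toC : ∀ x ∈ ((↑(insert c B) : Set Cell))ᶜ, ∃ r, r ∈ ((↑Q : Set Cell))ᶜ ∧
        Reach ((↑(insert c B) : Set Cell))ᶜ x r := by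
      intro x hx
      by_cases hxQ : x ∈ Q
      · have hxc : x ≠ c := by
          intro hxeq; rw [hxeq] at hx
          exact hx (Finset.mem_coe.2 (Finset.mem_insert_self c B))
        have hxA : x ∈ A := by
          rcases hcover x hxQ hxc with h | h
          · exact h
          · exact absurd (Finset.mem_coe.2 (Finset.mem_insert_of_mem h)) hx
        have hxm : Reach ((↑(insert c B) : Set Cell))ᶜ x m :=
          reach_mono hAsubB'c ((reach_symm (hreachA x hxA)).trans (hreachA m hmA))
        refine ⟨t, htQ, hxm.tail ⟨htadj, hAsubB'c (Finset.mem_coe.2 hmA), hQc_subB htQ⟩⟩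
      · exact ⟨x, hxQ, Relation.ReflTransGen.refl⟩
    intro p hp q hq
    obtain ⟨rp, hrp, hp1⟩ := toC p hp
    obtain ⟨rq, hrq, hq1⟩ := toC q hq
    exact hp1.trans ((reach_mono hQc_subB (hcompl rp hrp rq hrq)).trans (reach_symm hq1))
  have hA'poly : IsPolyomino (insert c A) :=
    ⟨⟨c, Finset.mem_insert_self c A⟩, hA'conn, hA'compl⟩
  have hB'poly : IsPolyomino (insert c B) :=
    ⟨⟨c, Finset.mem_insert_self c B⟩, hB'conn, hB'compl⟩
  have hA'lt : (insert c A).card < n := by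
    rw [← hcard]
    exact Finset.card_lt_card
      ((Finset.ssubset_iff_of_subset (fun z hz => hA'Q z hz)).2 ⟨_, hD, hDA'⟩)
  have hB'lt : (insert c B).card < n := by
    rw [← hcard]
    exact Finset.card_lt_card
      ((Finset.ssubset_iff_of_subset (fun z hz => hB'Q z hz)).2 ⟨_, hL, hLB'⟩)
  have hoddA := IH _ hA'lt (insert c A) rfl hA'poly
  have hoddB := IH _ hB'lt (insert c B) rfl hB'poly
  -- counting
  have hQeq : Q = insert c (A ∪ B) := by
    ext q
    simp only [Finset.mem_insert, Finset.mem_union]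
    constructor
    · intro hq
      by_cases hqc : q = c
      · exact Or.inl hqc
      · exact Or.inr (hcover q hq hqc)
    · rintro (rfl | h | h)
      · exact hcQ
      · exact hAQ _ h
      · exact hBQ _ h
  have hcAB : c ∉ A ∪ B := by
    rw [Finset.mem_union]; rintro (h | h)
    exacts [hcA h, hcB h]
  have hdisj : Disjoint A B := Finset.disjoint_left.2 (fun {a} h1 h2 => hAB a h1 h2)
  have hNQ : N Q = wloc c Q + (∑ p ∈ A, wloc p Q + ∑ p ∈ B, wloc p Q) := by
    unfold N
    rw [Finset.sum_congr hQeq (fun _ _ => rfl), Finset.sum_insert hcAB,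
      Finset.sum_union hdisj]
  have hsumA : ∑ p ∈ A, wloc p Q = ∑ p ∈ A, wloc p (insert c A) :=
    Finset.sum_congr rfl (wloc_comp hcQ hU hUR hAQ hAclose)
  have hsumB : ∑ p ∈ B, wloc p Q = ∑ p ∈ B, wloc p (insert c B) :=
    Finset.sum_congr rfl (wloc_comp hcQ hU hUR hBQ hBclose)
  have hNA' : N (insert c A) = wloc c (insert c A) + ∑ p ∈ A, wloc p (insert c A) := by
    unfold N; rw [Finset.sum_insert hcA]
  have hNB' : N (insert c B) = wloc c (insert c B) + ∑ p ∈ B, wloc p (insert c B) := by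
    unfold N; rw [Finset.sum_insert hcB]
  have hwcQ : wloc c Q = 3 := by simp [wloc, hL, hD, hdiag]
  have hwcA' : wloc c (insert c A) = 2 := by
    have h2 : ((c.1 - 1, c.2) : Cell) ∈ insert c A := Finset.mem_insert_of_mem hLA
    simp [wloc, hDA', h2]
  have hwcB' : wloc c (insert c B) = 2 := by
    have h1 : ((c.1, c.2 - 1) : Cell) ∈ insert c B := Finset.mem_insert_of_mem hDB
    simp [wloc, hLB', h1]
  rw [Nat.odd_iff] at hoddA hoddB ⊢
  omega

lemma N_odd : ∀ (n : ℕ) (Q : Finset Cell), Q.card = n → IsPolyomino Q → Odd (N Q) := by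
  intro n
  induction n using Nat.strong_induction_on with
  | _ n IH =>
  intro Q hcard hQ
  classical
  obtain ⟨hne, hconn, hcompl⟩ := hQ
  obtain ⟨m1, hm1Q, hmax1⟩ := Finset.exists_max_image Q (fun p => p.1) hne
  have hTne : (Q.filter (fun p => p.1 = m1.1)).Nonempty :=
    ⟨m1, Finset.mem_filter.2 ⟨hm1Q, rfl⟩⟩
  obtain ⟨c, hcT, hmax2⟩ := Finset.exists_max_image _ (fun p => p.2) hTne
  have hcQ : c ∈ Q := (Finset.mem_filter.1 hcT).1
  have hc1 : c.1 = m1.1 := (Finset.mem_filter.1 hcT).2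
  have Hmax : ∀ q ∈ Q, q.1 < c.1 ∨ (q.1 = c.1 ∧ q.2 ≤ c.2) := by
    intro q hq
    have h1 := hmax1 q hq
    by_cases h2 : q.1 = c.1
    · refine Or.inr ⟨h2, hmax2 q (Finset.mem_filter.2 ⟨hq, by omega⟩)⟩
    · exact Or.inl (by omega)
  have hU : (c.1, c.2 + 1) ∉ Q := by
    intro h; have := Hmax _ h; simp only at this; omega
  have hR : (c.1 + 1, c.2) ∉ Q := by
    intro h; have := Hmax _ h; simp only at this; omega
  have hUR : (c.1 + 1, c.2 + 1) ∉ Q := by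
    intro h; have := Hmax _ h; simp only at this; omega
  have hnbr : ∀ m : Cell, m ∈ Q → CellAdj m c →
      m = (c.1 - 1, c.2) ∨ m = (c.1, c.2 - 1) := by
    intro m hm hadj
    rcases cellAdj_cases (cellAdj_symm hadj) with h | h | h | h
    · exact absurd (h ▸ hm) hR
    · exact Or.inl h
    · exact absurd (h ▸ hm) hU
    · exact Or.inr h
  have hLc : ((c.1 - 1, c.2) : Cell) ≠ c := by
    intro h; rw [Prod.ext_iff] at h; simp only at h; omega
  have hDc : ((c.1, c.2 - 1) : Cell) ≠ c := by
    intro h; rw [Prod.ext_iff] at h; simp only at h; omega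
  have hnpos : 1 ≤ n := by rw [← hcard]; exact Finset.card_pos.2 hne
  have erase_case :
      (∀ u v : Cell, u ∈ (↑Q : Set Cell) \ {c} → v ∈ (↑Q : Set Cell) \ {c} →
        CellAdj u c → CellAdj c v → Reach ((↑Q : Set Cell) \ {c}) u v) →
      (Q.erase c).Nonempty → Even (wloc c Q) → Odd (N Q) := by
    intro Hbyp hne' hev
    have hpoly := erase_poly hconn hcompl hcQ hR hne' Hbyp
    have hlt : (Q.erase c).card < n := by
      rw [Finset.card_erase_of_mem hcQ]; omega
    have hodd := IH _ hlt (Q.erase c) rfl hpoly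
    have heq := N_erase hcQ hU hR hUR
    rw [Nat.odd_iff] at hodd ⊢
    rw [Nat.even_iff] at hev
    omega
  by_cases hL : (c.1 - 1, c.2) ∈ Q
  · by_cases hD : (c.1, c.2 - 1) ∈ Q
    · by_cases hdiag : (c.1 - 1, c.2 - 1) ∈ Q
      · -- removable corner cell
        have hdgc : ((c.1 - 1, c.2 - 1) : Cell) ≠ c := by
          intro h; rw [Prod.ext_iff] at h; simp only at h; omega
        have hLS : ((c.1 - 1, c.2) : Cell) ∈ (↑Q : Set Cell) \ {c} := ⟨hL, hLc⟩
        have hDS : ((c.1, c.2 - 1) : Cell) ∈ (↑Q : Set Cell) \ {c} := ⟨hD, hDc⟩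
        have hdgS : ((c.1 - 1, c.2 - 1) : Cell) ∈ (↑Q : Set Cell) \ {c} := ⟨hdiag, hdgc⟩
        have hLdg : Reach ((↑Q : Set Cell) \ {c}) (c.1 - 1, c.2) (c.1, c.2 - 1) :=
          Relation.ReflTransGen.head ⟨mkAdj (by omega), hLS, hdgS⟩
            (Relation.ReflTransGen.single ⟨mkAdj (by omega), hdgS, hDS⟩)
        apply erase_case ?_ ⟨_, Finset.mem_erase.2 ⟨hLc, hL⟩⟩
          (by rw [show wloc c Q = 4 by simp [wloc, hL, hD, hdiag]]; decide)
        intro u v hu hv hadjuc hadjcv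
        rcases hnbr u hu.1 hadjuc with h1 | h1 <;>
          rcases hnbr v (hv.1) (cellAdj_symm hadjcv) with h2 | h2 <;> subst h1 <;> subst h2
        · exact Relation.ReflTransGen.refl
        · exact hLdg
        · exact reach_symm hLdg
        · exact Relation.ReflTransGen.refl
      · exact split_case IH hcard hconn hcompl hcQ Hmax hU hR hUR hnbr hLc hDc hL hD hdiag
    · -- only L
      apply erase_case ?_ ⟨_, Finset.mem_erase.2 ⟨hLc, hL⟩⟩
        (by rw [show wloc c Q = 2 by simp [wloc, hL, hD]]; decide)
      intro u v hu hv hadjuc hadjcv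
      rcases hnbr u hu.1 hadjuc with h1 | h1 <;>
        rcases hnbr v hv.1 (cellAdj_symm hadjcv) with h2 | h2 <;> subst h1 <;> subst h2
      · exact Relation.ReflTransGen.refl
      · exact absurd hv.1 hD
      · exact absurd hu.1 hD
      · exact absurd hu.1 hD
  · by_cases hD : (c.1, c.2 - 1) ∈ Q
    · -- only D
      apply erase_case ?_ ⟨_, Finset.mem_erase.2 ⟨hDc, hD⟩⟩
        (by rw [show wloc c Q = 2 by simp [wloc, hL, hD]]; decide)
      intro u v hu hv hadjuc hadjcv
      rcases hnbr u hu.1 hadjuc with h1 | h1 <;>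
        rcases hnbr v hv.1 (cellAdj_symm hadjcv) with h2 | h2 <;> subst h1 <;> subst h2
      · exact absurd hu.1 hL
      · exact absurd hu.1 hL
      · exact absurd hv.1 hL
      · exact Relation.ReflTransGen.refl
    · -- no neighbours: Q = {c}
      have hsingle : Q = {c} := by
        apply Finset.eq_singleton_iff_unique_mem.2
        refine ⟨hcQ, fun q hq => ?_⟩
        by_contra hqc
        have hre : Reach (↑Q) q c := hconn q hq c hcQ
        obtain ⟨l, hl⟩ := reach_to_walk hre hq
        obtain ⟨m, hmQ, hmc, hmadj, -⟩ := truncate l.length l q rfl hl hqc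
        rcases hnbr m hmQ hmadj with h | h
        · exact hL (h ▸ hmQ)
        · exact hD (h ▸ hmQ)
      rw [hsingle]
      unfold N
      rw [Finset.sum_singleton]
      have h1 : ((c.1, c.2 - 1) : Cell) ∉ ({c} : Finset Cell) := by
        simp only [Finset.mem_singleton]; exact hDc
      have h2 : ((c.1 - 1, c.2) : Cell) ∉ ({c} : Finset Cell) := by
        simp only [Finset.mem_singleton]; exact hLc
      rw [show wloc c {c} = 1 by simp [wloc, h1, h2]]
      exact ⟨0, rfl⟩

end PolyAux


/-- every `2×2`-polyomino has an odd number of interior vertices. -/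
theorem stmt3 (Q : Finset (ℤ × ℤ)) (hQ : IsPolyomino Q) :
    Odd (interiorVertices (scale2 Q)).card := by
  rw [PolyAux.cardA]
  exact PolyAux.N_odd Q.card Q rfl hQ
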